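/- For every triple (φ₀, γ₀, τ₀) ∈ ℝ³ with −1/2 ≤ φ₀ ≤ 1, (4/3)·φ₀ − 1/3 ≤ γ₀ ≤ min{ 2·φ₀, (2/3)·φ₀ + 1/3 }, and τ₀ = (4/3)·φ₀ − 1/3, there exists a copula C together with a copula measure μ of C such that φ(C) = φ₀, γ(C) = γ₀, and 4·∫_{[0,1]²} C dμ − 1 = τ₀. -/

import Mathlib

open MeasureTheory Set

/-- A bivariate copula, viewed as a real function of two variables whose defining
properties are required on the unit square. -/
def IsCopula (C : ℝ → ℝ → ℝ) : Prop :=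
  (∀ v ∈ Icc (0:ℝ) 1, C 0 v = 0) ∧
  (∀ u ∈ Icc (0:ℝ) 1, C u 0 = 0) ∧
  (∀ u ∈ Icc (0:ℝ) 1, C u 1 = u) ∧
  (∀ v ∈ Icc (0:ℝ) 1, C 1 v = v) ∧
  (∀ u₁ u₂ v₁ v₂ : ℝ, 0 ≤ u₁ → u₁ ≤ u₂ → u₂ ≤ 1 → 0 ≤ v₁ → v₁ ≤ v₂ → v₂ ≤ 1 →
    0 ≤ C u₂ v₂ - C u₂ v₁ - C u₁ v₂ + C u₁ v₁)

/-- Spearman's rho: ρ(C) = 12·∫₀¹∫₀¹ C(u,v) du dv − 3. -/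
noncomputable def spearmanRho (C : ℝ → ℝ → ℝ) : ℝ :=
  12 * (∫ u in (0:ℝ)..1, ∫ v in (0:ℝ)..1, C u v) - 3

/-- Spearman's footrule: φ(C) = 6·∫₀¹ C(u,u) du − 2. -/
noncomputable def footrule (C : ℝ → ℝ → ℝ) : ℝ :=
  6 * (∫ u in (0:ℝ)..1, C u u) - 2

/-- Gini's gamma: γ(C) = 4·∫₀¹ C(u,u) du + 4·∫₀¹ C(u,1−u) du − 2. -/
noncomputable def giniGamma (C : ℝ → ℝ → ℝ) : ℝ :=
  4 * (∫ u in (0:ℝ)..1, C u u) + 4 * (∫ u in (0:ℝ)..1, C u (1 - u)) - 2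

/-- Blomqvist's beta: β(C) = 4·C(1/2,1/2) − 1. -/
noncomputable def blomqvistBeta (C : ℝ → ℝ → ℝ) : ℝ :=
  4 * C (1/2) (1/2) - 1

/-- A copula measure of a copula `C`: a probability measure on the plane with
μ([0,u]×[0,v]) = C(u,v) for u,v in the unit interval. -/
def IsCopulaMeasure (C : ℝ → ℝ → ℝ) (μ : Measure (ℝ × ℝ)) : Prop :=
  IsProbabilityMeasure μ ∧
  ∀ u ∈ Icc (0:ℝ) 1, ∀ v ∈ Icc (0:ℝ) 1,
    μ (Icc 0 u ×ˢ Icc 0 v) = ENNReal.ofReal (C u v)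

/-- Kendall's tau expressed via a copula measure μ of C:
τ(C) = 4·∫_{[0,1]²} C dμ − 1. -/
noncomputable def kendallTauInt (C : ℝ → ℝ → ℝ) (μ : Measure (ℝ × ℝ)) : ℝ :=
  4 * (∫ p in Icc (0:ℝ) 1 ×ˢ Icc (0:ℝ) 1, C p.1 p.2 ∂μ) - 1

/-- `B` is the ordinal sum of the copulas `Bk k` with respect to the pairwise disjoint
open subintervals `(a k, b k)` of `[0,1]`. -/
def IsOrdinalSum {n : ℕ} (a b : Fin n → ℝ) (Bk : Fin n → ℝ → ℝ → ℝ)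
    (B : ℝ → ℝ → ℝ) : Prop :=
  (∀ k, 0 ≤ a k ∧ a k ≤ b k ∧ b k ≤ 1) ∧
  (Pairwise fun i j => Disjoint (Ioo (a i) (b i)) (Ioo (a j) (b j))) ∧
  (∀ k, ∀ u ∈ Icc (a k) (b k), ∀ v ∈ Icc (a k) (b k),
    B u v = a k + (b k - a k) * Bk k ((u - a k) / (b k - a k)) ((v - a k) / (b k - a k))) ∧
  (∀ u ∈ Icc (0:ℝ) 1, ∀ v ∈ Icc (0:ℝ) 1,
    (∀ k, ¬(u ∈ Icc (a k) (b k) ∧ v ∈ Icc (a k) (b k))) → B u v = min u v)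


set_option linter.unusedSectionVars false
set_option linter.unusedVariables false
set_option linter.unnecessarySeqFocus false

noncomputable def Cf (a b c : ℝ) (u v : ℝ) : ℝ :=
  max (min c u - max (c - v) 0) 0 + max (min a (min u v) - c) 0
    + max (min b u - max (a + b - v) a) 0 + max (min u v - b) 0

noncomputable def gf (a b c : ℝ) (t : ℝ) : ℝ :=
  if t < c then c - t else if a ≤ t ∧ t ≤ b then a + b - t else t

section eval
variable {a b c u v : ℝ}
variable (hc0 : 0 ≤ c) (hca : c ≤ a) (ha2 : a ≤ 1/2) (hab : 1 - a ≤ b) (hb1 : b ≤ 1)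

lemma Cf_nonneg : 0 ≤ Cf a b c u v := by
  unfold Cf
  have h1 := le_max_right (min c u - max (c - v) 0) (0:ℝ)
  have h2 := le_max_right (min a (min u v) - c) (0:ℝ)
  have h3 := le_max_right (min b u - max (a + b - v) a) (0:ℝ)
  have h4 := le_max_right (min u v - b) (0:ℝ)
  linarith

include hc0 hca ha2 hab hb1

lemma basic_facts : 0 ≤ a ∧ a ≤ b ∧ 0 ≤ b ∧ c ≤ 1 ∧ (1:ℝ)/2 ≤ b ∧ a ≤ 1 ∧ c ≤ b := by
  refine ⟨hc0.trans hca, by linarith, by linarith, by linarith, by linarith, by linarith, by linarith⟩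

lemma Cf_zero_left (hv0 : 0 ≤ v) : Cf a b c 0 v = 0 := by
  obtain ⟨ha0, hab', hb0, hc1, hb2, ha1, hcb⟩ := basic_facts hc0 hca ha2 hab hb1
  unfold Cf
  rw [min_eq_right hc0, min_eq_left hv0, min_eq_right ha0, min_eq_right hb0]
  have e1 := le_max_right (c - v) (0:ℝ)
  have e3 := le_max_right (a + b - v) a
  rw [max_eq_right (by linarith : (0:ℝ) - max (c - v) 0 ≤ 0),
    max_eq_right (by linarith : (0:ℝ) - c ≤ 0),
    max_eq_right (by linarith : (0:ℝ) - max (a + b - v) a ≤ 0),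
    max_eq_right (by linarith : (0:ℝ) - b ≤ 0)]
  norm_num

lemma Cf_zero_right (hu0 : 0 ≤ u) : Cf a b c u 0 = 0 := by
  obtain ⟨ha0, hab', hb0, hc1, hb2, ha1, hcb⟩ := basic_facts hc0 hca ha2 hab hb1
  unfold Cf
  rw [min_eq_right hu0, sub_zero, sub_zero, max_eq_left hc0,
    max_eq_left (by linarith : a ≤ a + b), min_eq_right ha0]
  have e1 := min_le_left c u
  have e3 := min_le_left b u
  rw [max_eq_right (by linarith : min c u - c ≤ 0),
    max_eq_right (by linarith : (0:ℝ) - c ≤ 0),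
    max_eq_right (by linarith : min b u - (a + b) ≤ 0),
    max_eq_right (by linarith : (0:ℝ) - b ≤ 0)]
  norm_num

lemma Cf_one_right (hu0 : 0 ≤ u) (hu1 : u ≤ 1) : Cf a b c u 1 = u := by
  obtain ⟨ha0, hab', hb0, hc1, hb2, ha1, hcb⟩ := basic_facts hc0 hca ha2 hab hb1
  unfold Cf
  rw [min_eq_left hu1, max_eq_right (by linarith : c - 1 ≤ 0), sub_zero,
    max_eq_right (by linarith : a + b - 1 ≤ a),
    max_eq_left (le_min hc0 hu0)]
  rcases le_total u c with h | h
  · rw [min_eq_right h, min_eq_right (h.trans hca), min_eq_right (h.trans hcb),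
      max_eq_right (by linarith : u - c ≤ 0),
      max_eq_right (by linarith : u - a ≤ 0),
      max_eq_right (by linarith : u - b ≤ 0)]
    ring
  rcases le_total u a with h' | h'
  · rw [min_eq_left h, min_eq_right h', min_eq_right (h'.trans hab'),
      max_eq_left (by linarith : 0 ≤ u - c),
      max_eq_right (by linarith : u - a ≤ 0),
      max_eq_right (by linarith : u - b ≤ 0)]
    ring
  rcases le_total u b with h'' | h''
  · rw [min_eq_left h, min_eq_left h', min_eq_right h'',
      max_eq_left (by linarith : 0 ≤ a - c),
      max_eq_left (by linarith : 0 ≤ u - a),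
      max_eq_right (by linarith : u - b ≤ 0)]
    ring
  · rw [min_eq_left h, min_eq_left h', min_eq_left h'',
      max_eq_left (by linarith : 0 ≤ a - c),
      max_eq_left (by linarith : 0 ≤ b - a),
      max_eq_left (by linarith : 0 ≤ u - b)]
    ring

lemma Cf_one_left (hv0 : 0 ≤ v) (hv1 : v ≤ 1) : Cf a b c 1 v = v := by
  obtain ⟨ha0, hab', hb0, hc1, hb2, ha1, hcb⟩ := basic_facts hc0 hca ha2 hab hb1
  unfold Cf
  rw [min_eq_left hc1, min_eq_right hv1, min_eq_left hb1]
  rcases le_total v c with h | h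
  · rw [max_eq_left (by linarith : 0 ≤ c - v), min_eq_right (h.trans hca),
      max_eq_left (by linarith : a ≤ a + b - v),
      max_eq_left (by linarith : 0 ≤ c - (c - v)),
      max_eq_right (by linarith : v - c ≤ 0),
      max_eq_right (by linarith : b - (a + b - v) ≤ 0),
      max_eq_right (by linarith : v - b ≤ 0)]
    ring
  rcases le_total v a with h' | h'
  · rw [max_eq_right (by linarith : c - v ≤ 0), sub_zero, min_eq_right h',
      max_eq_left (by linarith : a ≤ a + b - v),
      max_eq_left hc0,
      max_eq_left (by linarith : 0 ≤ v - c),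
      max_eq_right (by linarith : b - (a + b - v) ≤ 0),
      max_eq_right (by linarith : v - b ≤ 0)]
    ring
  rcases le_total v b with h'' | h''
  · rw [max_eq_right (by linarith : c - v ≤ 0), sub_zero, min_eq_left h',
      max_eq_left (by linarith : a ≤ a + b - v),
      max_eq_left hc0,
      max_eq_left (by linarith : 0 ≤ a - c),
      max_eq_left (by linarith : 0 ≤ b - (a + b - v)),
      max_eq_right (by linarith : v - b ≤ 0)]
    ring
  · rw [max_eq_right (by linarith : c - v ≤ 0), sub_zero, min_eq_left h',
      max_eq_right (by linarith : a + b - v ≤ a),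
      max_eq_left hc0,
      max_eq_left (by linarith : 0 ≤ a - c),
      max_eq_left (by linarith : 0 ≤ b - a),
      max_eq_left (by linarith : 0 ≤ v - b)]
    ring

end eval
lemma vol_sandwich {p q : ℝ} {E : Set ℝ} (h1 : Ioo p q ⊆ E) (h2 : E ⊆ Icc p q) :
    volume E = ENNReal.ofReal (q - p) := by
  have l1 : volume E ≤ ENNReal.ofReal (q - p) := by
    calc volume E ≤ volume (Icc p q) := measure_mono h2
    _ = ENNReal.ofReal (q - p) := Real.volume_Icc
  have l2 : ENNReal.ofReal (q - p) ≤ volume E := by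
    calc ENNReal.ofReal (q - p) = volume (Ioo p q) := Real.volume_Ioo.symm
    _ ≤ volume E := measure_mono h1
  exact le_antisymm l1 l2

lemma ofReal_max0 (x : ℝ) : ENNReal.ofReal x = ENNReal.ofReal (max x 0) := by
  rcases le_total x 0 with h | h
  · simp [ENNReal.ofReal_eq_zero.2 h, max_eq_right h]
  · rw [max_eq_left h]

lemma ofReal4 (x y z w : ℝ) :
    ENNReal.ofReal x + ENNReal.ofReal y + ENNReal.ofReal z + ENNReal.ofReal w
      = ENNReal.ofReal (max x 0 + max y 0 + max z 0 + max w 0) := by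
  rw [ofReal_max0 x, ofReal_max0 y, ofReal_max0 z, ofReal_max0 w,
    ← ENNReal.ofReal_add (le_max_right _ _) (le_max_right _ _),
    ← ENNReal.ofReal_add (by positivity) (le_max_right _ _),
    ← ENNReal.ofReal_add (by positivity) (le_max_right _ _)]
section eval2
variable {a b c u t : ℝ}
variable (hc0 : 0 ≤ c) (hca : c ≤ a) (ha2 : a ≤ 1/2) (hab : 1 - a ≤ b) (hb1 : b ≤ 1)
include hc0 hca ha2 hab hb1

-- diagonal evaluations
lemma Cf_diag1 (h0 : 0 ≤ u) (h1 : u ≤ c/2) : Cf a b c u u = 0 := by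
  obtain ⟨ha0, hab', hb0, hc1, hb2, ha1, hcb⟩ := basic_facts hc0 hca ha2 hab hb1
  have e3 := le_max_right (a + b - u) a
  unfold Cf
  rw [min_self, min_eq_right (by linarith : u ≤ c), max_eq_left (by linarith : 0 ≤ c - u),
    min_eq_right (by linarith : u ≤ a), min_eq_right (by linarith : u ≤ b),
    max_eq_right (by linarith : u - (c - u) ≤ 0),
    max_eq_right (by linarith : u - c ≤ 0),
    max_eq_right (by linarith : u - max (a + b - u) a ≤ 0),
    max_eq_right (by linarith : u - b ≤ 0)]
  ring

lemma Cf_diag2 (h0 : c/2 ≤ u) (h1 : u ≤ c) : Cf a b c u u = 2*u - c := by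
  obtain ⟨ha0, hab', hb0, hc1, hb2, ha1, hcb⟩ := basic_facts hc0 hca ha2 hab hb1
  have e3 := le_max_right (a + b - u) a
  unfold Cf
  rw [min_self, min_eq_right h1, max_eq_left (by linarith : 0 ≤ c - u),
    min_eq_right (by linarith : u ≤ a), min_eq_right (by linarith : u ≤ b),
    max_eq_left (by linarith : 0 ≤ u - (c - u)),
    max_eq_right (by linarith : u - c ≤ 0),
    max_eq_right (by linarith : u - max (a + b - u) a ≤ 0),
    max_eq_right (by linarith : u - b ≤ 0)]
  ring

lemma Cf_diag3 (h0 : c ≤ u) (h1 : u ≤ a) : Cf a b c u u = u := by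
  obtain ⟨ha0, hab', hb0, hc1, hb2, ha1, hcb⟩ := basic_facts hc0 hca ha2 hab hb1
  unfold Cf
  rw [min_self, min_eq_left h0, max_eq_right (by linarith : c - u ≤ 0), sub_zero,
    min_eq_right h1, min_eq_right (by linarith : u ≤ b),
    max_eq_left (by linarith : a ≤ a + b - u),
    max_eq_left hc0,
    max_eq_left (by linarith : 0 ≤ u - c),
    max_eq_right (by linarith : u - (a + b - u) ≤ 0),
    max_eq_right (by linarith : u - b ≤ 0)]
  ring

lemma Cf_diag4 (h0 : a ≤ u) (h1 : u ≤ (a+b)/2) : Cf a b c u u = a := by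
  obtain ⟨ha0, hab', hb0, hc1, hb2, ha1, hcb⟩ := basic_facts hc0 hca ha2 hab hb1
  unfold Cf
  rw [min_self, min_eq_left (by linarith : c ≤ u), max_eq_right (by linarith : c - u ≤ 0),
    sub_zero, min_eq_left h0, min_eq_right (by linarith : u ≤ b),
    max_eq_left (by linarith : a ≤ a + b - u),
    max_eq_left hc0,
    max_eq_left (by linarith : 0 ≤ a - c),
    max_eq_right (by linarith : u - (a + b - u) ≤ 0),
    max_eq_right (by linarith : u - b ≤ 0)]
  ring

lemma Cf_diag5 (h0 : (a+b)/2 ≤ u) (h1 : u ≤ b) : Cf a b c u u = 2*u - b := by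
  obtain ⟨ha0, hab', hb0, hc1, hb2, ha1, hcb⟩ := basic_facts hc0 hca ha2 hab hb1
  unfold Cf
  rw [min_self, min_eq_left (by linarith : c ≤ u), max_eq_right (by linarith : c - u ≤ 0),
    sub_zero, min_eq_left (by linarith : a ≤ u), min_eq_right h1,
    max_eq_left (by linarith : a ≤ a + b - u),
    max_eq_left hc0,
    max_eq_left (by linarith : 0 ≤ a - c),
    max_eq_left (by linarith : 0 ≤ u - (a + b - u)),
    max_eq_right (by linarith : u - b ≤ 0)]
  ring

lemma Cf_diag6 (h0 : b ≤ u) (h1 : u ≤ 1) : Cf a b c u u = u := by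
  obtain ⟨ha0, hab', hb0, hc1, hb2, ha1, hcb⟩ := basic_facts hc0 hca ha2 hab hb1
  unfold Cf
  rw [min_self, min_eq_left (by linarith : c ≤ u), max_eq_right (by linarith : c - u ≤ 0),
    sub_zero, min_eq_left (by linarith : a ≤ u), min_eq_left h0,
    max_eq_right (by linarith : a + b - u ≤ a),
    max_eq_left hc0,
    max_eq_left (by linarith : 0 ≤ a - c),
    max_eq_left (by linarith : 0 ≤ b - a),
    max_eq_left (by linarith : 0 ≤ u - b)]
  ring

-- antidiagonal evaluations : Cf u (1-u)
lemma Cf_anti_T3 (h0 : 0 ≤ u) (h1 : u ≤ 1) :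
    max (min b u - max (a + b - (1-u)) a) 0 = 0 := by
  obtain ⟨ha0, hab', hb0, hc1, hb2, ha1, hcb⟩ := basic_facts hc0 hca ha2 hab hb1
  rcases le_total u a with h | h
  · have e := le_max_right (a + b - (1-u)) a
    have : min b u ≤ u := min_le_right b u
    exact max_eq_right (by linarith)
  · have e := le_max_left (a + b - (1-u)) a
    have : min b u ≤ u := min_le_right b u
    exact max_eq_right (by linarith)

lemma Cf_anti1 (h0 : 0 ≤ u) (h1 : u ≤ a) : Cf a b c u (1-u) = u := by
  obtain ⟨ha0, hab', hb0, hc1, hb2, ha1, hcb⟩ := basic_facts hc0 hca ha2 hab hb1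
  unfold Cf
  rw [Cf_anti_T3 hc0 hca ha2 hab hb1 h0 (by linarith),
    max_eq_right (by linarith : c - (1-u) ≤ 0), sub_zero,
    min_eq_left (by linarith : u ≤ 1 - u), min_eq_right h1,
    max_eq_left (le_min hc0 h0)]
  rcases le_total u c with h | h
  · rw [min_eq_right h,
      max_eq_right (by linarith : u - c ≤ 0),
      max_eq_right (by linarith : u - b ≤ 0)]
    ring
  · rw [min_eq_left h,
      max_eq_left (by linarith : 0 ≤ u - c),
      max_eq_right (by linarith : u - b ≤ 0)]
    ring

lemma Cf_anti2 (h0 : a ≤ u) (h1 : u ≤ 1 - a) : Cf a b c u (1-u) = a := by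
  obtain ⟨ha0, hab', hb0, hc1, hb2, ha1, hcb⟩ := basic_facts hc0 hca ha2 hab hb1
  unfold Cf
  rw [Cf_anti_T3 hc0 hca ha2 hab hb1 (by linarith) (by linarith),
    max_eq_right (by linarith : c - (1-u) ≤ 0), sub_zero,
    min_eq_left (by linarith : c ≤ u), max_eq_left hc0,
    min_eq_left (le_min h0 (by linarith : a ≤ 1 - u)),
    max_eq_left (by linarith : 0 ≤ a - c),
    max_eq_right (show min u (1-u) - b ≤ 0 by
      have := min_le_right u (1-u); linarith)]
  ring

lemma Cf_anti3 (h0 : 1 - a ≤ u) (h1 : u ≤ 1 - c) : Cf a b c u (1-u) = 1 - u := by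
  obtain ⟨ha0, hab', hb0, hc1, hb2, ha1, hcb⟩ := basic_facts hc0 hca ha2 hab hb1
  unfold Cf
  rw [Cf_anti_T3 hc0 hca ha2 hab hb1 (by linarith) (by linarith),
    max_eq_right (by linarith : c - (1-u) ≤ 0), sub_zero,
    min_eq_left (by linarith : c ≤ u), max_eq_left hc0,
    min_eq_right (by linarith : 1 - u ≤ u), min_eq_right (by linarith : 1 - u ≤ a),
    max_eq_left (by linarith : 0 ≤ 1 - u - c),
    max_eq_right (by linarith : 1 - u - b ≤ 0)]
  ring

lemma Cf_anti4 (h0 : 1 - c ≤ u) (h1 : u ≤ 1) : Cf a b c u (1-u) = 1 - u := by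
  obtain ⟨ha0, hab', hb0, hc1, hb2, ha1, hcb⟩ := basic_facts hc0 hca ha2 hab hb1
  unfold Cf
  rw [Cf_anti_T3 hc0 hca ha2 hab hb1 (by linarith) (by linarith),
    max_eq_left (by linarith : 0 ≤ c - (1-u)),
    min_eq_left (by linarith : c ≤ u),
    min_eq_right (by linarith : 1 - u ≤ u), min_eq_right (by linarith : 1 - u ≤ a),
    max_eq_left (by linarith : 0 ≤ c - (c - (1-u))),
    max_eq_right (by linarith : 1 - u - c ≤ 0),
    max_eq_right (by linarith : 1 - u - b ≤ 0)]
  ring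

-- curve evaluations
lemma Cf_curve1 (h0 : 0 ≤ t) (h1 : t ≤ c) : Cf a b c t (c - t) = 0 := by
  obtain ⟨ha0, hab', hb0, hc1, hb2, ha1, hcb⟩ := basic_facts hc0 hca ha2 hab hb1
  have e2a : min a (min t (c - t)) ≤ min t (c-t) := min_le_right _ _
  have e2b : min t (c-t) ≤ t := min_le_left _ _
  have e3a : a + b - (c - t) ≤ max (a + b - (c-t)) a := le_max_left _ _
  have e3b : min b t ≤ t := min_le_right b t
  unfold Cf
  rw [min_eq_right h1, max_eq_left (by linarith : 0 ≤ c - (c - t)),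
    max_eq_right (by linarith : t - (c - (c - t)) ≤ 0),
    max_eq_right (by linarith : min a (min t (c - t)) - c ≤ 0),
    max_eq_right (by linarith : min b t - max (a + b - (c - t)) a ≤ 0),
    max_eq_right (by linarith : min t (c - t) - b ≤ 0)]
  ring

lemma Cf_curve3 (h0 : a ≤ t) (h1 : t ≤ b) : Cf a b c t (a + b - t) = a := by
  obtain ⟨ha0, hab', hb0, hc1, hb2, ha1, hcb⟩ := basic_facts hc0 hca ha2 hab hb1
  unfold Cf
  rw [min_eq_left (by linarith : c ≤ t),
    max_eq_right (by linarith : c - (a + b - t) ≤ 0), sub_zero, max_eq_left hc0,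
    min_eq_left (le_min h0 (by linarith : a ≤ a + b - t)),
    max_eq_left (by linarith : 0 ≤ a - c),
    min_eq_right h1,
    max_eq_left (by linarith : a ≤ a + b - (a + b - t)),
    max_eq_right (by linarith : t - (a + b - (a + b - t)) ≤ 0),
    max_eq_right (show min t (a + b - t) - b ≤ 0 by
      have := min_le_left t (a + b - t); linarith)]
  ring

end eval2
section meas
variable {a b c u v t : ℝ}

lemma gf_eq1 (h : t < c) : gf a b c t = c - t := if_pos h

lemma gf_eq2 (h1 : c ≤ t) (h2 : t < a) : gf a b c t = t := by
  unfold gf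
  rw [if_neg (not_lt.2 h1), if_neg]
  rintro ⟨h3, _⟩; linarith

lemma gf_eq3 (hca : c ≤ a) (h1 : a ≤ t) (h2 : t ≤ b) : gf a b c t = a + b - t := by
  unfold gf
  rw [if_neg (not_lt.2 (hca.trans h1)), if_pos ⟨h1, h2⟩]

lemma gf_eq4 (hcb : c ≤ b) (h1 : b < t) : gf a b c t = t := by
  unfold gf
  rw [if_neg (not_lt.2 (hcb.trans h1.le)), if_neg]
  rintro ⟨_, h3⟩; linarith

lemma measurable_gf : Measurable (gf a b c) := by
  unfold gf
  exact Measurable.ite measurableSet_Iio (by fun_prop)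
    (Measurable.ite measurableSet_Icc (by fun_prop) (by fun_prop))

variable (hc0 : 0 ≤ c) (hca : c ≤ a) (ha2 : a ≤ 1/2) (hab : 1 - a ≤ b) (hb1 : b ≤ 1)
include hc0 hca ha2 hab hb1

lemma gf_mem (ht : t ∈ Ioo (0:ℝ) 1) : 0 ≤ gf a b c t ∧ gf a b c t ≤ 1 := by
  obtain ⟨ha0, hab', hb0, hc1, hb2, ha1, hcb⟩ := basic_facts hc0 hca ha2 hab hb1
  obtain ⟨ht0, ht1⟩ := ht
  unfold gf
  split_ifs with h1 h2
  · constructor <;> linarith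
  · obtain ⟨h3, h4⟩ := h2; constructor <;> linarith
  · constructor <;> linarith

lemma volume_E (hu0 : 0 ≤ u) (hu1 : u ≤ 1) (hv0 : 0 ≤ v) (hv1 : v ≤ 1) :
    volume (Ioo (0:ℝ) 1 ∩ Iic u ∩ gf a b c ⁻¹' Iic v) = ENNReal.ofReal (Cf a b c u v) := by
  obtain ⟨ha0, hab', hb0, hc1, hb2, ha1, hcb⟩ := basic_facts hc0 hca ha2 hab hb1
  set E : Set ℝ := Ioo (0:ℝ) 1 ∩ Iic u ∩ gf a b c ⁻¹' Iic v with hE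
  have hmemE : ∀ x, x ∈ E ↔ (0 < x ∧ x < 1) ∧ x ≤ u ∧ gf a b c x ≤ v := by
    intro x
    simp [hE, mem_inter_iff, mem_Ioo, mem_Iic, and_assoc]
  have hsplit : E = (E ∩ Iio c) ∪ ((E ∩ Ico c a) ∪ ((E ∩ Icc a b) ∪ (E ∩ Ioi b))) := by
    ext x
    simp only [mem_union, mem_inter_iff, mem_Iio, mem_Ico, mem_Icc, mem_Ioi]
    constructor
    · intro h
      rcases lt_or_ge x c with h' | h'
      · exact Or.inl ⟨h, h'⟩
      rcases lt_or_ge x a with h'' | h''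
      · exact Or.inr (Or.inl ⟨h, h', h''⟩)
      rcases le_or_gt x b with h''' | h'''
      · exact Or.inr (Or.inr (Or.inl ⟨h, h'', h'''⟩))
      · exact Or.inr (Or.inr (Or.inr ⟨h, h'''⟩))
    · rintro (⟨h, _⟩ | ⟨h, _⟩ | ⟨h, _⟩ | ⟨h, _⟩) <;> exact h
  have hEmeas : MeasurableSet E :=
    (measurableSet_Ioo.inter measurableSet_Iic).inter (measurable_gf measurableSet_Iic)
  -- piece 1
  have v1 : volume (E ∩ Iio c) = ENNReal.ofReal (min c u - max (c - v) 0) := by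
    apply vol_sandwich (p := max (c - v) 0) (q := min c u)
    · intro x hx
      obtain ⟨hx1, hx2⟩ := hx
      have hxc : x < c := lt_of_lt_of_le hx2 (min_le_left _ _)
      have hx0 : 0 < x := lt_of_le_of_lt (le_max_right _ _) hx1
      have hxv : c - v < x := lt_of_le_of_lt (le_max_left _ _) hx1
      refine ⟨(hmemE x).2 ⟨⟨hx0, by linarith⟩,
        le_of_lt (lt_of_lt_of_le hx2 (min_le_right _ _)), ?_⟩, hxc⟩
      rw [gf_eq1 hxc]; linarith
    · rintro x ⟨hx, hxc⟩
      rw [hmemE] at hx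
      obtain ⟨⟨hx0, hx1⟩, hxu, hxv⟩ := hx
      rw [mem_Iio] at hxc
      rw [gf_eq1 hxc] at hxv
      exact ⟨max_le (by linarith) hx0.le, le_min hxc.le hxu⟩
  -- piece 2
  have v2 : volume (E ∩ Ico c a) = ENNReal.ofReal (min a (min u v) - c) := by
    apply vol_sandwich (p := c) (q := min a (min u v))
    · intro x hx
      obtain ⟨hx1, hx2⟩ := hx
      have hxa : x < a := lt_of_lt_of_le hx2 (min_le_left _ _)
      have hxu : x < u := lt_of_lt_of_le hx2 ((min_le_right _ _).trans (min_le_left _ _))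
      have hxv : x < v := lt_of_lt_of_le hx2 ((min_le_right _ _).trans (min_le_right _ _))
      refine ⟨(hmemE x).2 ⟨⟨by linarith, by linarith⟩, hxu.le, ?_⟩, ⟨hx1.le, hxa⟩⟩
      rw [gf_eq2 hx1.le hxa]; exact hxv.le
    · rintro x ⟨hx, hxc, hxa⟩
      rw [hmemE] at hx
      obtain ⟨⟨hx0, hx1⟩, hxu, hxv⟩ := hx
      rw [gf_eq2 hxc hxa] at hxv
      exact ⟨hxc, le_min hxa.le (le_min hxu hxv)⟩
  -- piece 3
  have v3 : volume (E ∩ Icc a b) = ENNReal.ofReal (min b u - max (a + b - v) a) := by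
    apply vol_sandwich (p := max (a + b - v) a) (q := min b u)
    · intro x hx
      obtain ⟨hx1, hx2⟩ := hx
      have hxa : a < x := lt_of_le_of_lt (le_max_right _ _) hx1
      have hxb : x < b := lt_of_lt_of_le hx2 (min_le_left _ _)
      have hxv : a + b - v < x := lt_of_le_of_lt (le_max_left _ _) hx1
      refine ⟨(hmemE x).2 ⟨⟨by linarith, by linarith⟩,
        le_of_lt (lt_of_lt_of_le hx2 (min_le_right _ _)), ?_⟩, ⟨hxa.le, hxb.le⟩⟩
      rw [gf_eq3 hca hxa.le hxb.le]; linarith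
    · rintro x ⟨hx, hxa, hxb⟩
      rw [hmemE] at hx
      obtain ⟨⟨hx0, hx1⟩, hxu, hxv⟩ := hx
      rw [gf_eq3 hca hxa hxb] at hxv
      exact ⟨max_le (by linarith) hxa, le_min hxb hxu⟩
  -- piece 4
  have v4 : volume (E ∩ Ioi b) = ENNReal.ofReal (min u v - b) := by
    apply vol_sandwich (p := b) (q := min u v)
    · intro x hx
      obtain ⟨hx1, hx2⟩ := hx
      have hxu : x < u := lt_of_lt_of_le hx2 (min_le_left _ _)
      have hxv : x < v := lt_of_lt_of_le hx2 (min_le_right _ _)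
      refine ⟨(hmemE x).2 ⟨⟨by linarith, by linarith⟩, hxu.le, ?_⟩, hx1⟩
      rw [gf_eq4 hcb hx1]; exact hxv.le
    · rintro x ⟨hx, hxb⟩
      rw [hmemE] at hx
      obtain ⟨⟨hx0, hx1⟩, hxu, hxv⟩ := hx
      rw [mem_Ioi] at hxb
      rw [gf_eq4 hcb hxb] at hxv
      exact ⟨hxb.le, le_min hxu hxv⟩
  -- disjointness
  have d1 : Disjoint (E ∩ Iio c) ((E ∩ Ico c a) ∪ ((E ∩ Icc a b) ∪ (E ∩ Ioi b))) := by
    rw [disjoint_left]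
    rintro x ⟨_, hx⟩ (⟨_, h1', _⟩ | ⟨_, h1', _⟩ | ⟨_, h1'⟩) <;>
      rw [mem_Iio] at hx <;> (try simp only [mem_Ioi] at *) <;> linarith
  have d2 : Disjoint (E ∩ Ico c a) ((E ∩ Icc a b) ∪ (E ∩ Ioi b)) := by
    rw [disjoint_left]
    rintro x ⟨_, _, hx⟩ (⟨_, h1', _⟩ | ⟨_, h1'⟩) <;> (try simp only [mem_Ioi] at *) <;> linarith
  have d3 : Disjoint (E ∩ Icc a b) (E ∩ Ioi b) := by
    rw [disjoint_left]
    rintro x ⟨_, _, hx⟩ ⟨_, h1'⟩ <;> simp only [mem_Ioi] at * <;> linarith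
  rw [hsplit, measure_union d1 (((hEmeas.inter measurableSet_Ico).union
      ((hEmeas.inter measurableSet_Icc).union (hEmeas.inter measurableSet_Ioi)))),
    measure_union d2 ((hEmeas.inter measurableSet_Icc).union (hEmeas.inter measurableSet_Ioi)),
    measure_union d3 (hEmeas.inter measurableSet_Ioi), v1, v2, v3, v4]
  unfold Cf
  rw [← add_assoc, ← add_assoc, ofReal4]

end meas
section cop
variable {a b c : ℝ}
variable (hc0 : 0 ≤ c) (hca : c ≤ a) (ha2 : a ≤ 1/2) (hab : 1 - a ≤ b) (hb1 : b ≤ 1)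

noncomputable def muf (a b c : ℝ) : Measure (ℝ × ℝ) :=
  Measure.map (fun t => (t, gf a b c t)) (volume.restrict (Ioo 0 1))

lemma measurable_Tf : Measurable (fun t => (t, gf a b c t)) :=
  measurable_id.prodMk measurable_gf

lemma muf_prob : IsProbabilityMeasure (muf a b c) := by
  constructor
  rw [muf, Measure.map_apply measurable_Tf MeasurableSet.univ, preimage_univ,
    Measure.restrict_apply MeasurableSet.univ, univ_inter, Real.volume_Ioo]
  norm_num

include hc0 hca ha2 hab hb1

lemma muf_rect {u v : ℝ} (hu0 : 0 ≤ u) (hu1 : u ≤ 1) (hv0 : 0 ≤ v) (hv1 : v ≤ 1) :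
    muf a b c (Icc 0 u ×ˢ Icc 0 v) = ENNReal.ofReal (Cf a b c u v) := by
  rw [muf, Measure.map_apply measurable_Tf (measurableSet_Icc.prod measurableSet_Icc),
    Measure.restrict_apply (measurable_Tf (measurableSet_Icc.prod measurableSet_Icc))]
  have hset : (fun t => (t, gf a b c t)) ⁻¹' (Icc 0 u ×ˢ Icc 0 v) ∩ Ioo 0 1
      = Ioo (0:ℝ) 1 ∩ Iic u ∩ gf a b c ⁻¹' Iic v := by
    ext x
    simp only [mem_inter_iff, mem_preimage, mem_prod, mem_Icc, mem_Ioo, mem_Iic]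
    constructor
    · rintro ⟨⟨⟨_, h1⟩, ⟨_, h2⟩⟩, h3⟩
      exact ⟨⟨h3, h1⟩, h2⟩
    · rintro ⟨⟨h3, h1⟩, h2⟩
      have hg := gf_mem hc0 hca ha2 hab hb1 (mem_Ioo.2 h3)
      exact ⟨⟨⟨h3.1.le, h1⟩, ⟨hg.1, h2⟩⟩, h3⟩
  rw [hset]
  exact volume_E hc0 hca ha2 hab hb1 hu0 hu1 hv0 hv1

lemma Cf_two_increasing {u₁ u₂ v₁ v₂ : ℝ} (hu1 : 0 ≤ u₁) (h12 : u₁ ≤ u₂) (hu2 : u₂ ≤ 1)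
    (hv1 : 0 ≤ v₁) (hv12 : v₁ ≤ v₂) (hv2 : v₂ ≤ 1) :
    0 ≤ Cf a b c u₂ v₂ - Cf a b c u₂ v₁ - Cf a b c u₁ v₂ + Cf a b c u₁ v₁ := by
  set R : ℝ → ℝ → Set ℝ := fun u v => Ioo (0:ℝ) 1 ∩ Iic u ∩ gf a b c ⁻¹' Iic v with hR
  have hmeas : ∀ u v, MeasurableSet (R u v) := fun u v =>
    (measurableSet_Ioo.inter measurableSet_Iic).inter (measurable_gf measurableSet_Iic)
  have hinter : R u₂ v₁ ∩ R u₁ v₂ = R u₁ v₁ := by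
    ext x
    simp only [hR, mem_inter_iff, mem_Iic, mem_preimage]
    constructor
    · rintro ⟨⟨⟨h1, h2⟩, h3⟩, ⟨⟨_, h4⟩, _⟩⟩
      exact ⟨⟨h1, h4⟩, h3⟩
    · rintro ⟨⟨h1, h2⟩, h3⟩
      exact ⟨⟨⟨h1, h2.trans h12⟩, h3⟩, ⟨⟨h1, h2⟩, h3.trans hv12⟩⟩
  have hunion : R u₂ v₁ ∪ R u₁ v₂ ⊆ R u₂ v₂ := by
    rintro x (⟨⟨h1, h2⟩, h3⟩ | ⟨⟨h1, h2⟩, h3⟩)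
    · exact ⟨⟨h1, h2⟩, le_trans h3 hv12⟩
    · exact ⟨⟨h1, le_trans h2 h12⟩, h3⟩
  have key : volume (R u₂ v₁) + volume (R u₁ v₂)
      ≤ volume (R u₂ v₂) + volume (R u₁ v₁) := by
    rw [← measure_union_add_inter _ (hmeas u₁ v₂), hinter]
    exact add_le_add (measure_mono (μ := volume) hunion) le_rfl
  rw [volume_E hc0 hca ha2 hab hb1 (by linarith) hu2 hv1 (hv12.trans hv2),
    volume_E hc0 hca ha2 hab hb1 hu1 (h12.trans hu2) (by linarith) hv2,
    volume_E hc0 hca ha2 hab hb1 (by linarith) hu2 (by linarith) hv2,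
    volume_E hc0 hca ha2 hab hb1 hu1 (h12.trans hu2) hv1 (hv12.trans hv2),
    ← ENNReal.ofReal_add Cf_nonneg Cf_nonneg, ← ENNReal.ofReal_add Cf_nonneg Cf_nonneg,
    ENNReal.ofReal_le_ofReal_iff (add_nonneg Cf_nonneg Cf_nonneg)] at key
  linarith [Cf_nonneg (a := a) (b := b) (c := c) (u := u₁) (v := v₁)]

lemma Cf_isCopula : IsCopula (Cf a b c) := by
  refine ⟨fun v hv => Cf_zero_left hc0 hca ha2 hab hb1 hv.1,
    fun u hu => Cf_zero_right hc0 hca ha2 hab hb1 hu.1,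
    fun u hu => Cf_one_right hc0 hca ha2 hab hb1 hu.1 hu.2,
    fun v hv => Cf_one_left hc0 hca ha2 hab hb1 hv.1 hv.2,
    fun u₁ u₂ v₁ v₂ h1 h2 h3 h4 h5 h6 =>
      Cf_two_increasing hc0 hca ha2 hab hb1 h1 h2 h3 h4 h5 h6⟩

lemma muf_isCopulaMeasure : IsCopulaMeasure (Cf a b c) (muf a b c) := by
  refine ⟨muf_prob, fun u hu v hv => muf_rect hc0 hca ha2 hab hb1 hu.1 hu.2 hv.1 hv.2⟩

end cop
section integrals
open intervalIntegral

lemma int_lin (p q r s : ℝ) : ∫ x in p..q, (r * x + s) = r * (q^2 - p^2) / 2 + s * (q - p) := by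
  have h1 : IntervalIntegrable (fun x => r * x) volume p q :=
    (continuous_const.mul continuous_id).intervalIntegrable _ _
  have h2 : IntervalIntegrable (fun _ => s) volume p q := intervalIntegrable_const
  rw [intervalIntegral.integral_add h1 h2, intervalIntegral.integral_const,
    intervalIntegral.integral_const_mul, integral_id, smul_eq_mul]
  ring

lemma int_congr {f g : ℝ → ℝ} {p q : ℝ} (hpq : p ≤ q) (h : ∀ x ∈ Icc p q, f x = g x) :
    ∫ x in p..q, f x = ∫ x in p..q, g x := by
  apply intervalIntegral.integral_congr
  rwa [uIcc_of_le hpq]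

lemma piece_eq {f g : ℝ → ℝ} {p q : ℝ} (hpq : p ≤ q) (hg : Continuous g)
    (h : ∀ x ∈ Ioo p q, f x = g x) :
    IntervalIntegrable f volume p q ∧ (∫ x in p..q, f x) = ∫ x in p..q, g x := by
  have hae : f =ᵐ[volume.restrict (Ioc p q)] g := by
    rw [Filter.EventuallyEq, ae_restrict_iff' measurableSet_Ioc, MeasureTheory.ae_iff]
    refine measure_mono_null ?_ (Real.volume_singleton (a := q))
    intro x hx
    simp only [mem_setOf_eq] at hx
    push_neg at hx
    obtain ⟨⟨hx1, hx2⟩, hne⟩ := hx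
    simp only [mem_singleton_iff]
    by_contra hq
    exact hne (h x ⟨hx1, lt_of_le_of_ne hx2 hq⟩)
  constructor
  · exact ⟨(hg.intervalIntegrable p q).1.congr hae.symm,
      by rw [Ioc_eq_empty (not_lt.2 hpq)]; exact integrableOn_empty⟩
  · rw [intervalIntegral.integral_of_le hpq, intervalIntegral.integral_of_le hpq]
    exact integral_congr_ae hae

end integrals
section intvals
open intervalIntegral
variable {a b c : ℝ}
variable (hc0 : 0 ≤ c) (hca : c ≤ a) (ha2 : a ≤ 1/2) (hab : 1 - a ≤ b) (hb1 : b ≤ 1)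
include hc0 hca ha2 hab hb1

lemma int_diag : ∫ u in (0:ℝ)..1, Cf a b c u u = 1/2 - (c^2 + (b-a)^2)/4 := by
  obtain ⟨ha0, hab', hb0, hc1, hb2, ha1, hcb⟩ := basic_facts hc0 hca ha2 hab hb1
  have hF : Continuous fun u : ℝ => Cf a b c u u := by unfold Cf; fun_prop
  have hint : ∀ p q : ℝ, IntervalIntegrable (fun u => Cf a b c u u) volume p q :=
    fun p q => hF.intervalIntegrable p q
  have s1 : ∫ u in (0:ℝ)..(c/2), Cf a b c u u = 0 := by
    rw [int_congr (by linarith) (fun x hx => by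
      rw [Cf_diag1 hc0 hca ha2 hab hb1 hx.1 hx.2] : ∀ x ∈ Icc (0:ℝ) (c/2),
        Cf a b c x x = (fun _ : ℝ => (0:ℝ)) x)]
    simp
  have s2 : ∫ u in (c/2)..c, Cf a b c u u = c^2/4 := by
    rw [int_congr (by linarith) (fun x hx => by
      rw [Cf_diag2 hc0 hca ha2 hab hb1 hx.1 hx.2]; ring : ∀ x ∈ Icc (c/2) c,
        Cf a b c x x = (fun x : ℝ => 2*x + (-c)) x), int_lin]
    ring
  have s3 : ∫ u in c..a, Cf a b c u u = (a^2 - c^2)/2 := by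
    rw [int_congr hca (fun x hx => by
      rw [Cf_diag3 hc0 hca ha2 hab hb1 hx.1 hx.2]; ring : ∀ x ∈ Icc c a,
        Cf a b c x x = (fun x : ℝ => 1*x + 0) x), int_lin]
    ring
  have s4 : ∫ u in a..((a+b)/2), Cf a b c u u = a * ((a+b)/2 - a) := by
    rw [int_congr (by linarith) (fun x hx => by
      rw [Cf_diag4 hc0 hca ha2 hab hb1 hx.1 hx.2]; ring : ∀ x ∈ Icc a ((a+b)/2),
        Cf a b c x x = (fun x : ℝ => 0*x + a) x), int_lin]
    ring
  have s5 : ∫ u in ((a+b)/2)..b, Cf a b c u u = 2*(b^2 - ((a+b)/2)^2)/2 - b*(b - (a+b)/2) := by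
    rw [int_congr (by linarith) (fun x hx => by
      rw [Cf_diag5 hc0 hca ha2 hab hb1 hx.1 hx.2]; ring : ∀ x ∈ Icc ((a+b)/2) b,
        Cf a b c x x = (fun x : ℝ => 2*x + (-b)) x), int_lin]
    ring
  have s6 : ∫ u in b..1, Cf a b c u u = (1 - b^2)/2 := by
    rw [int_congr hb1 (fun x hx => by
      rw [Cf_diag6 hc0 hca ha2 hab hb1 hx.1 hx.2]; ring : ∀ x ∈ Icc b 1,
        Cf a b c x x = (fun x : ℝ => 1*x + 0) x), int_lin]
    ring
  rw [← integral_add_adjacent_intervals (hint 0 (c/2)) (hint (c/2) 1),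
    ← integral_add_adjacent_intervals (hint (c/2) c) (hint c 1),
    ← integral_add_adjacent_intervals (hint c a) (hint a 1),
    ← integral_add_adjacent_intervals (hint a ((a+b)/2)) (hint ((a+b)/2) 1),
    ← integral_add_adjacent_intervals (hint ((a+b)/2) b) (hint b 1),
    s1, s2, s3, s4, s5, s6]
  ring

lemma int_anti : ∫ u in (0:ℝ)..1, Cf a b c u (1 - u) = a - a^2 := by
  obtain ⟨ha0, hab', hb0, hc1, hb2, ha1, hcb⟩ := basic_facts hc0 hca ha2 hab hb1
  have hF : Continuous fun u : ℝ => Cf a b c u (1 - u) := by unfold Cf; fun_prop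
  have hint : ∀ p q : ℝ, IntervalIntegrable (fun u => Cf a b c u (1 - u)) volume p q :=
    fun p q => hF.intervalIntegrable p q
  have s1 : ∫ u in (0:ℝ)..c, Cf a b c u (1-u) = (c^2 - 0)/2 := by
    rw [int_congr hc0 (fun x hx => by
      rw [Cf_anti1 hc0 hca ha2 hab hb1 hx.1 (hx.2.trans hca)]; ring : ∀ x ∈ Icc (0:ℝ) c,
        Cf a b c x (1-x) = (fun x : ℝ => 1*x + 0) x), int_lin]
    ring
  have s2 : ∫ u in c..a, Cf a b c u (1-u) = (a^2 - c^2)/2 := by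
    rw [int_congr hca (fun x hx => by
      rw [Cf_anti1 hc0 hca ha2 hab hb1 (hc0.trans hx.1) hx.2]; ring : ∀ x ∈ Icc c a,
        Cf a b c x (1-x) = (fun x : ℝ => 1*x + 0) x), int_lin]
    ring
  have s3 : ∫ u in a..(1-a), Cf a b c u (1-u) = a * (1 - a - a) := by
    rw [int_congr (by linarith) (fun x hx => by
      rw [Cf_anti2 hc0 hca ha2 hab hb1 hx.1 hx.2]; ring : ∀ x ∈ Icc a (1-a),
        Cf a b c x (1-x) = (fun x : ℝ => 0*x + a) x), int_lin]
    ring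
  have s4 : ∫ u in (1-a)..(1-c), Cf a b c u (1-u)
      = (-1)*((1-c)^2 - (1-a)^2)/2 + (1 - c - (1 - a)) := by
    rw [int_congr (by linarith) (fun x hx => by
      rw [Cf_anti3 hc0 hca ha2 hab hb1 hx.1 hx.2]; ring : ∀ x ∈ Icc (1-a) (1-c),
        Cf a b c x (1-x) = (fun x : ℝ => (-1)*x + 1) x), int_lin]
    ring
  have s5 : ∫ u in (1-c)..1, Cf a b c u (1-u) = (-1)*(1 - (1-c)^2)/2 + (1 - (1 - c)) := by
    rw [int_congr (by linarith) (fun x hx => by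
      rw [Cf_anti4 hc0 hca ha2 hab hb1 hx.1 hx.2]; ring : ∀ x ∈ Icc (1-c) 1,
        Cf a b c x (1-x) = (fun x : ℝ => (-1)*x + 1) x), int_lin]
    ring
  rw [← integral_add_adjacent_intervals (hint 0 c) (hint c 1),
    ← integral_add_adjacent_intervals (hint c a) (hint a 1),
    ← integral_add_adjacent_intervals (hint a (1-a)) (hint (1-a) 1),
    ← integral_add_adjacent_intervals (hint (1-a) (1-c)) (hint (1-c) 1),
    s1, s2, s3, s4, s5]
  ring

end intvals
lemma continuous_Cf (a b c : ℝ) : Continuous fun p : ℝ × ℝ => Cf a b c p.1 p.2 := by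
  unfold Cf; fun_prop

section curve
open intervalIntegral
variable {a b c : ℝ}
variable (hc0 : 0 ≤ c) (hca : c ≤ a) (ha2 : a ≤ 1/2) (hab : 1 - a ≤ b) (hb1 : b ≤ 1)
include hc0 hca ha2 hab hb1

lemma int_curve : ∫ t in (0:ℝ)..1, Cf a b c t (gf a b c t)
    = (a^2 - c^2)/2 + a*(b-a) + (1-b^2)/2 := by
  obtain ⟨ha0, hab', hb0, hc1, hb2, ha1, hcb⟩ := basic_facts hc0 hca ha2 hab hb1
  have p1 := piece_eq (f := fun t => Cf a b c t (gf a b c t)) (g := fun _ => (0:ℝ))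
    hc0 continuous_const (fun x hx => by
      show Cf a b c x (gf a b c x) = _
      rw [gf_eq1 hx.2, Cf_curve1 hc0 hca ha2 hab hb1 hx.1.le hx.2.le])
  have p2 := piece_eq (f := fun t => Cf a b c t (gf a b c t)) (g := fun x => 1*x + 0)
    hca (by fun_prop) (fun x hx => by
      show Cf a b c x (gf a b c x) = _
      rw [gf_eq2 hx.1.le hx.2, Cf_diag3 hc0 hca ha2 hab hb1 hx.1.le hx.2.le]; ring)
  have p3 := piece_eq (f := fun t => Cf a b c t (gf a b c t)) (g := fun _ => a)
    hab' continuous_const (fun x hx => by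
      show Cf a b c x (gf a b c x) = _
      rw [gf_eq3 hca hx.1.le hx.2.le, Cf_curve3 hc0 hca ha2 hab hb1 hx.1.le hx.2.le])
  have p4 := piece_eq (f := fun t => Cf a b c t (gf a b c t)) (g := fun x => 1*x + 0)
    hb1 (by fun_prop) (fun x hx => by
      show Cf a b c x (gf a b c x) = _
      rw [gf_eq4 hcb hx.1, Cf_diag6 hc0 hca ha2 hab hb1 hx.1.le hx.2.le]; ring)
  rw [← integral_add_adjacent_intervals p1.1 (p2.1.trans (p3.1.trans p4.1)),
    ← integral_add_adjacent_intervals p2.1 (p3.1.trans p4.1),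
    ← integral_add_adjacent_intervals p3.1 p4.1,
    p1.2, p2.2, p3.2, p4.2, int_lin, int_lin,
    intervalIntegral.integral_const, intervalIntegral.integral_const, smul_eq_mul, smul_eq_mul]
  ring

lemma int_kendall : ∫ p in Icc (0:ℝ) 1 ×ˢ Icc (0:ℝ) 1, Cf a b c p.1 p.2 ∂(muf a b c)
    = (a^2 - c^2)/2 + a*(b-a) + (1-b^2)/2 := by
  have hT : Measurable (fun t => (t, gf a b c t)) := measurable_Tf
  have hS : MeasurableSet (Icc (0:ℝ) 1 ×ˢ Icc (0:ℝ) 1) := measurableSet_Icc.prod measurableSet_Icc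
  have hsub : Ioo (0:ℝ) 1 ⊆ (fun t => (t, gf a b c t)) ⁻¹' (Icc 0 1 ×ˢ Icc 0 1) := by
    intro t ht
    have hg := gf_mem hc0 hca ha2 hab hb1 ht
    exact ⟨⟨ht.1.le, ht.2.le⟩, hg.1, hg.2⟩
  have hres : (muf a b c).restrict (Icc (0:ℝ) 1 ×ˢ Icc (0:ℝ) 1) = muf a b c := by
    rw [muf, Measure.restrict_map hT hS, Measure.restrict_restrict (hT hS),
      inter_eq_self_of_subset_right hsub]
  have h1 : ∫ p in Icc (0:ℝ) 1 ×ˢ Icc (0:ℝ) 1, Cf a b c p.1 p.2 ∂(muf a b c)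
      = ∫ p, Cf a b c p.1 p.2 ∂((muf a b c).restrict (Icc (0:ℝ) 1 ×ˢ Icc (0:ℝ) 1)) := rfl
  rw [h1, hres, muf,
    integral_map hT.aemeasurable ((continuous_Cf a b c).aestronglyMeasurable)]
  have h2 : ∫ t in Ioo (0:ℝ) 1, Cf a b c t (gf a b c t)
      = ∫ t in (0:ℝ)..1, Cf a b c t (gf a b c t) := by
    rw [intervalIntegral.integral_of_le zero_le_one, integral_Ioc_eq_integral_Ioo]
  rw [h2]
  exact int_curve hc0 hca ha2 hab hb1

lemma footrule_Cf : footrule (Cf a b c) = 1 - 3/2*(c^2+(b-a)^2) := by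
  rw [footrule, int_diag hc0 hca ha2 hab hb1]; ring

lemma gini_Cf : giniGamma (Cf a b c) = -(c^2+(b-a)^2) + 4*(a - a^2) := by
  rw [giniGamma, int_diag hc0 hca ha2 hab hb1, int_anti hc0 hca ha2 hab hb1]; ring

lemma kendall_Cf : kendallTauInt (Cf a b c) (muf a b c) = 1 - 2*(c^2+(b-a)^2) := by
  rw [kendallTauInt, int_kendall hc0 hca ha2 hab hb1]; ring

end curve
/-- Every point of the face F₄ is attained. -/
theorem exists_copula_face_F4 (φ₀ γ₀ τ₀ : ℝ)
    (h1 : -(1/2) ≤ φ₀) (h2 : φ₀ ≤ 1)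
    (h3 : (4/3) * φ₀ - 1/3 ≤ γ₀) (h4 : γ₀ ≤ min (2 * φ₀) ((2/3) * φ₀ + 1/3))
    (h5 : τ₀ = (4/3) * φ₀ - 1/3) :
    ∃ (C : ℝ → ℝ → ℝ) (μ : Measure (ℝ × ℝ)), IsCopula C ∧ IsCopulaMeasure C μ ∧
      footrule C = φ₀ ∧ giniGamma C = γ₀ ∧ kendallTauInt C μ = τ₀ := by
  obtain ⟨h4a, h4b⟩ := le_min_iff.mp h4
  set S : ℝ := 2*(1-φ₀)/3 with hS
  set A : ℝ := (γ₀ + S)/4 with hA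
  have hS0 : 0 ≤ S := by rw [hS]; linarith
  have hS1 : S ≤ 1 := by rw [hS]; linarith
  have hA14 : A ≤ 1/4 := by rw [hA, hS]; linarith
  have hAS2 : A ≤ (1-S)/2 := by rw [hA, hS]; linarith
  have hAlow : (1-S)/4 ≤ A := by rw [hA, hS]; linarith
  have hA0 : 0 ≤ A := by linarith
  set s : ℝ := Real.sqrt (1 - 4*A) with hs
  have hs0 : 0 ≤ s := Real.sqrt_nonneg _
  have hs2 : s^2 = 1 - 4*A := Real.sq_sqrt (by linarith)
  have hs1 : s ≤ 1 := Real.sqrt_le_one.mpr (by linarith)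
  set aa : ℝ := (1 - s)/2 with haa
  have ha0 : 0 ≤ aa := by rw [haa]; linarith
  have ha2 : aa ≤ 1/2 := by rw [haa]; linarith
  have haA : aa * (1 - aa) = A := by
    have e : aa * (1 - aa) = (1 - s^2)/4 := by rw [haa]; ring
    rw [e, hs2]; ring
  set bb : ℝ := min (aa + Real.sqrt S) 1 with hbb
  set cc : ℝ := Real.sqrt (max (S - (1-aa)^2) 0) with hcc
  have hsqS0 : 0 ≤ Real.sqrt S := Real.sqrt_nonneg _
  have hsqS2 : Real.sqrt S * Real.sqrt S = S := Real.mul_self_sqrt hS0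
  have hc0 : 0 ≤ cc := Real.sqrt_nonneg _
  have hcc2 : cc^2 = max (S - (1-aa)^2) 0 := Real.sq_sqrt (le_max_right _ _)
  have hexpand : aa^2 + (1-aa)^2 = 1 - 2*(aa*(1-aa)) := by ring
  have hca : cc ≤ aa := by
    have hle : max (S - (1-aa)^2) 0 ≤ aa^2 := by
      apply max_le _ (by positivity)
      linarith
    calc cc = Real.sqrt (max (S - (1-aa)^2) 0) := hcc
    _ ≤ Real.sqrt (aa^2) := Real.sqrt_le_sqrt hle
    _ = aa := by rw [Real.sqrt_sq ha0]
  have hsS : s ≤ Real.sqrt S := by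
    rw [hs]
    exact Real.sqrt_le_sqrt (by linarith)
  have hab : 1 - aa ≤ bb := by
    apply le_min _ (by linarith)
    rw [haa]; linarith
  have hb1 : bb ≤ 1 := min_le_right _ _
  have hsum : cc^2 + (bb - aa)^2 = S := by
    have e2 : (1-aa)*(1-aa) = (1-aa)^2 := by ring
    rcases le_total (aa + Real.sqrt S) 1 with h | h
    · have h' : Real.sqrt S ≤ 1 - aa := by linarith
      have h'' := mul_self_le_mul_self hsqS0 h'
      have hmax : max (S - (1-aa)^2) 0 = 0 := max_eq_right (by linarith)
      have hbbe : bb = aa + Real.sqrt S := min_eq_left h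
      have e3 : (aa + Real.sqrt S - aa)^2 = Real.sqrt S * Real.sqrt S := by ring
      rw [hbbe, hcc2, hmax, e3, hsqS2]
      ring
    · have h' : 1 - aa ≤ Real.sqrt S := by linarith
      have h'' := mul_self_le_mul_self (by linarith : (0:ℝ) ≤ 1 - aa) h'
      have hmax : max (S - (1-aa)^2) 0 = S - (1-aa)^2 := max_eq_left (by linarith)
      have hbbe : bb = 1 := min_eq_right h
      rw [hbbe, hcc2, hmax]
      ring
  refine ⟨Cf aa bb cc, muf aa bb cc,
    Cf_isCopula hc0 hca ha2 hab hb1,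
    muf_isCopulaMeasure hc0 hca ha2 hab hb1, ?_, ?_, ?_⟩
  · rw [footrule_Cf hc0 hca ha2 hab hb1, hsum, hS]; ring
  · rw [gini_Cf hc0 hca ha2 hab hb1, hsum]
    have e4 : aa - aa^2 = aa * (1 - aa) := by ring
    rw [e4, haA, hA]; ring
  · rw [kendall_Cf hc0 hca ha2 hab hb1, hsum, h5, hS]; ring
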